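/- Fix w ∈ ℝⁿ and β ∈ (0,1), and suppose L(w,·) is measurable and μ-integrable and the distribution function Φ(w,α) = μ{r : L(w,r) ≤ α} is continuous in α (equivalently, μ{r : L(w,r) = α} = 0 for every α). Then α ↦ F_β(w,α) is continuously differentiable on ℝ with derivative ∂F_β/∂α (w,α) = (Φ(w,α) − β)/(1 − β). -/

import Mathlib

open MeasureTheory

/-- For fixed `w` and `β ∈ (0,1)`, if `L w` is measurable and integrable and the
distribution function `Φ(w,α) = μ {r | L w r ≤ α}` is continuous in `α` (equivalently
`μ {r | L w r = α} = 0` for every `α`), then `α ↦ F_β(w,α)` is continuously differentiable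
with derivative `(Φ(w,α) - β)/(1 - β)`. -/
theorem stmt_1 {n : ℕ} (μ : Measure (Fin n → ℝ)) [IsProbabilityMeasure μ]
    (L : (Fin n → ℝ) → (Fin n → ℝ) → ℝ) (w : Fin n → ℝ) (β : ℝ)
    (hβ : β ∈ Set.Ioo (0 : ℝ) 1)
    (hmeas : Measurable (L w)) (hint : Integrable (L w) μ)
    (hcont : ∀ α : ℝ, μ {r | L w r = α} = 0) :
    (∀ α : ℝ,
      HasDerivAt (fun a : ℝ => a + (1 - β)⁻¹ * ∫ r, max (L w r - a) 0 ∂μ)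
        (((μ {r | L w r ≤ α}).toReal - β) / (1 - β)) α) ∧
    Continuous (fun α : ℝ => ((μ {r | L w r ≤ α}).toReal - β) / (1 - β)) := by
  have hβ1 : (0:ℝ) < 1 - β := by linarith [hβ.2]
  have hsle : ∀ α : ℝ, MeasurableSet {r | L w r ≤ α} := fun α =>
    hmeas (measurableSet_Iic : MeasurableSet (Set.Iic α))
  constructor
  · intro α
    -- derivative of the integral term
    set F' : (Fin n → ℝ) → ℝ := fun r => if α < L w r then -1 else 0 with hF'def
    have hlip : ∀ r : Fin n → ℝ, LipschitzWith 1 (fun a : ℝ => max (L w r - a) 0) := by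
      intro r
      apply LipschitzWith.of_dist_le_mul
      intro x y
      simp only [Real.dist_eq, NNReal.coe_one, one_mul]
      calc |max (L w r - x) 0 - max (L w r - y) 0| ≤ |(L w r - x) - (L w r - y)| :=
            abs_max_sub_max_le_abs _ _ _
        _ = |x - y| := by rw [abs_sub_comm]; ring_nf
    have hae : ∀ᵐ r ∂μ, L w r ≠ α := by
      rw [ae_iff]
      simpa using hcont α
    have hdiff : ∀ᵐ r ∂μ, HasDerivAt (fun a : ℝ => max (L w r - a) 0) (F' r) α := by
      filter_upwards [hae] with r hr
      rcases lt_or_gt_of_ne hr with h | h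
      · -- L w r < α : locally zero
        have h0 : F' r = 0 := by simp [hF'def, not_lt.2 h.le]
        rw [h0]
        have hev : (fun a : ℝ => max (L w r - a) 0) =ᶠ[nhds α] fun _ => (0:ℝ) := by
          filter_upwards [eventually_gt_nhds h] with a ha
          exact max_eq_right (by linarith)
        exact (hasDerivAt_const α (0:ℝ)).congr_of_eventuallyEq hev
      · -- α < L w r : locally L w r - a
        have h0 : F' r = -1 := by simp [hF'def, h]
        rw [h0]
        have hev : (fun a : ℝ => max (L w r - a) 0) =ᶠ[nhds α] fun a => L w r - a := by
          filter_upwards [eventually_lt_nhds h] with a ha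
          exact max_eq_left (by linarith)
        exact ((hasDerivAt_id α).const_sub (L w r)).congr_of_eventuallyEq hev
    have hF'meas : AEStronglyMeasurable F' μ := by
      have : Measurable F' := Measurable.ite
        (hmeas measurableSet_Ioi : MeasurableSet {r | α < L w r}) measurable_const
        measurable_const
      exact this.aestronglyMeasurable
    have hFmeas : ∀ᶠ x in nhds α, AEStronglyMeasurable (fun r => max (L w r - x) 0) μ := by
      filter_upwards with x
      exact ((hmeas.sub measurable_const).max measurable_const).aestronglyMeasurable
    have hFint : Integrable (fun r => max (L w r - α) 0) μ :=
      (hint.sub (integrable_const α)).pos_part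
    have hlipon : ∀ᵐ r ∂μ, LipschitzOnWith (Real.nnabs ((fun _ => (1:ℝ)) r))
        (fun a : ℝ => max (L w r - a) 0) (Metric.ball α 1) := by
      filter_upwards with r
      have h1 : Real.nnabs (1:ℝ) = 1 := by simp
      rw [h1]
      exact LipschitzWith.lipschitzOnWith (hlip r)
    have hmain := hasDerivAt_integral_of_dominated_loc_of_lip
      (F := fun (a : ℝ) r => max (L w r - a) 0) (F' := F') (x₀ := α)
      (bound := fun _ => (1:ℝ)) (Metric.ball_mem_nhds α one_pos) hFmeas hFint hF'meas hlipon (integrable_const 1) hdiff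
    have hint' : HasDerivAt (fun a : ℝ => ∫ r, max (L w r - a) 0 ∂μ) (∫ r, F' r ∂μ) α := hmain.2
    -- compute ∫ F'
    have hcompl : {r | α < L w r} = {r | L w r ≤ α}ᶜ := by
      ext r; simp [not_le]
    have hsum : (μ {r | L w r ≤ α}).toReal + (μ {r | α < L w r}).toReal = 1 := by
      rw [hcompl, ← ENNReal.toReal_add (measure_ne_top μ _) (measure_ne_top μ _),
        measure_add_measure_compl (hsle α), measure_univ, ENNReal.toReal_one]
    have hintF' : ∫ r, F' r ∂μ = (μ {r | L w r ≤ α}).toReal - 1 := by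
      have heq : F' = Set.indicator {r | α < L w r} (fun _ => (-1:ℝ)) := by
        funext r
        simp [hF'def, Set.indicator_apply, Set.mem_setOf_eq]
      rw [hcompl] at heq
      rw [heq, integral_indicator_const _ ((hsle α).compl)]
      rw [hcompl] at hsum
      simp only [smul_eq_mul, measureReal_def]
      linarith [hsum]
    rw [hintF'] at hint'
    have : HasDerivAt (fun a : ℝ => a + (1 - β)⁻¹ * ∫ r, max (L w r - a) 0 ∂μ)
        (1 + (1 - β)⁻¹ * ((μ {r | L w r ≤ α}).toReal - 1)) α := (hasDerivAt_id α).add (hint'.const_mul ((1 - β)⁻¹))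
    convert this using 1
    linear_combination (inv_mul_cancel₀ hβ1.ne')
  · -- continuity of the (normalized) cdf
    let ν : Measure ℝ := μ.map (L w)
    have hν : IsProbabilityMeasure ν := Measure.isProbabilityMeasure_map hmeas.aemeasurable
    have hΦ : (fun α : ℝ => (μ {r | L w r ≤ α}).toReal)
        = fun α => ProbabilityTheory.cdf ν α := by
      funext α
      rw [ProbabilityTheory.cdf_eq_real, measureReal_def, Measure.map_apply hmeas measurableSet_Iic]
      rfl
    have hcdf : Continuous (fun α => ProbabilityTheory.cdf ν α) := by
      rw [continuous_iff_continuousAt]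
      intro α
      have hsing : (ProbabilityTheory.cdf ν).measure {α} = 0 := by
        rw [ProbabilityTheory.measure_cdf]
        show ν {α} = 0
        rw [Measure.map_apply hmeas (measurableSet_singleton α)]
        exact hcont α
      rw [StieltjesFunction.measure_singleton] at hsing
      have hle : Function.leftLim (ProbabilityTheory.cdf ν) α ≤ ProbabilityTheory.cdf ν α :=
        (ProbabilityTheory.cdf ν).mono.leftLim_le le_rfl
      have hge : ProbabilityTheory.cdf ν α ≤ Function.leftLim (ProbabilityTheory.cdf ν) α := by
        by_contra h
        push_neg at h
        have : (0:ℝ) < ProbabilityTheory.cdf ν α - Function.leftLim (ProbabilityTheory.cdf ν) α :=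
          by linarith
        rw [ENNReal.ofReal_eq_zero] at hsing
        linarith
      have hleft : Function.leftLim (ProbabilityTheory.cdf ν) α = ProbabilityTheory.cdf ν α :=
        le_antisymm hle hge
      rw [(ProbabilityTheory.cdf ν).mono.continuousAt_iff_leftLim_eq_rightLim, hleft,
        (ProbabilityTheory.cdf ν).rightLim_eq]
    have : Continuous (fun α : ℝ => (μ {r | L w r ≤ α}).toReal) := by
      rw [hΦ]; exact hcdf
    exact (this.sub continuous_const).div_const _
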